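/- Let J = {1,…,n} be a job set with volumes sorted in ascending order, v_1 ≤ v_2 ≤ … ≤ v_n, and let R^G be the Greedy schedule for J: recursively in ascending order of volumes, R^G_j(t) = 1_{t < t_j}·min(r_j, 1 − Σ_{i=1}^{j−1} R^G_i(t)), where t_j > 0 is the completion time chosen so that ∫_0^{t_j} min(r_j, 1 − Σ_{i=1}^{j−1} R^G_i(t)) dt = v_j. Then the total completion time of Greedy satisfies Σ_{j=1}^n t_j ≤ Σ_{j=1}^n Σ_{i=1}^j v_i + Σ_{j=1}^n v_j/r_j, i.e. C(R^G) ≤ C^A + C^L. -/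
import Mathlib


open MeasureTheory Set

noncomputable section
set_option maxHeartbeats 1000000

/-- The Greedy schedule's total completion time is at most `C^A + C^L`: if, with volumes
sorted ascending, `R` is the Greedy schedule with completion times `t_j` (each job gets
as much resource as possible as early as possible, and `t_j` is chosen so that job `j`
schedules exactly its volume), then
`∑_j t_j ≤ ∑_j ∑_{i ≤ j} v_i + ∑_j v_j / r_j`. -/
theorem stmt13 (n : ℕ) (v r : Fin n → ℝ)
    (hv : ∀ j, 0 < v j) (hr : ∀ j, 0 < r j ∧ r j ≤ 1)
    (hsorted : Monotone v)
    (R : Fin n → ℝ → ℝ) (tj : Fin n → ℝ) (htj : ∀ j, 0 < tj j)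
    (hR : ∀ j t, R j t =
      if 0 ≤ t ∧ t < tj j then min (r j) (1 - ∑ i ∈ Finset.Iio j, R i t) else 0)
    (hvol : ∀ j,
      (∫ t in (0:ℝ)..(tj j), min (r j) (1 - ∑ i ∈ Finset.Iio j, R i t)) = v j) :
    ∑ j, tj j ≤ (∑ j, ∑ i ∈ Finset.Iic j, v i) + ∑ j, v j / r j := by
  -- strong induction principle on Fin n
  have strong : ∀ (P : Fin n → Prop), (∀ j, (∀ i, i < j → P i) → P j) → ∀ j, P j := by
    intro P step j
    have H : ∀ m : ℕ, ∀ j : Fin n, (j : ℕ) < m → P j := by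
      intro m
      induction m with
      | zero => intro j h; omega
      | succ m ih =>
        intro j hj
        exact step j (fun i hi => ih i (by have := Fin.lt_def.mp hi; omega))
    exact H n j j.isLt
  -- abbreviations
  set A : Fin n → ℝ → ℝ := fun j t => ∑ i ∈ Finset.Iio j, R i t with hA
  set f : Fin n → ℝ → ℝ := fun j t => min (r j) (1 - A j t) with hf
  -- bounds: 0 ≤ A j t ≤ 1, 0 ≤ R j t, ∑_{i ≤ j} R i t ≤ 1
  have key : ∀ j : Fin n, ∀ t : ℝ,
      (0 ≤ A j t ∧ A j t ≤ 1) ∧ (0 ≤ R j t ∧ ∑ i ∈ Finset.Iic j, R i t ≤ 1) := by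
    refine strong _ ?_
    intro j ih t
    have hA0 : 0 ≤ A j t := by
      apply Finset.sum_nonneg
      intro i hi
      exact ((ih i (Finset.mem_Iio.mp hi) t).2).1
    have hA1 : A j t ≤ 1 := by
      rcases (Finset.Iio j).eq_empty_or_nonempty with he | hne
      · simp [hA, he]
      · set i₀ := (Finset.Iio j).max' hne with hi₀
        have hi₀mem : i₀ ∈ Finset.Iio j := (Finset.Iio j).max'_mem hne
        have hEq : Finset.Iio j = Finset.Iic i₀ := by
          ext i
          simp only [Finset.mem_Iio, Finset.mem_Iic]
          constructor
          · intro hi; exact Finset.le_max' _ i (Finset.mem_Iio.mpr hi)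
          · intro hi; exact lt_of_le_of_lt hi (Finset.mem_Iio.mp hi₀mem)
        have := ((ih i₀ (Finset.mem_Iio.mp hi₀mem) t).2).2
        simpa [hA, hEq] using this
    have hRj0 : 0 ≤ R j t := by
      rw [hR j t]
      split
      · exact le_min (le_of_lt (hr j).1) (by linarith)
      · exact le_rfl
    refine ⟨⟨hA0, hA1⟩, hRj0, ?_⟩
    have hsplit : ∑ i ∈ Finset.Iic j, R i t = R j t + A j t := by
      rw [hA, ← Finset.Iio_insert, Finset.sum_insert (by simp)]
    rw [hsplit, hR j t]
    split
    · have : min (r j) (1 - A j t) ≤ 1 - A j t := min_le_right _ _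
      linarith
    · linarith
  have hA0 : ∀ j t, 0 ≤ A j t := fun j t => ((key j t).1).1
  have hA1 : ∀ j t, A j t ≤ 1 := fun j t => ((key j t).1).2
  have hR0 : ∀ j t, 0 ≤ R j t := fun j t => ((key j t).2).1
  have hR1 : ∀ j t, R j t ≤ 1 := by
    intro j t
    rw [hR j t]
    split
    · calc min (r j) (1 - A j t) ≤ r j := min_le_left _ _
        _ ≤ 1 := (hr j).2
    · norm_num
  have hf0 : ∀ j t, 0 ≤ f j t := fun j t =>
    le_min (le_of_lt (hr j).1) (by have := hA1 j t; linarith)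
  have hf1 : ∀ j t, f j t ≤ 1 :=
    fun j t => le_trans (min_le_left _ _) (hr j).2
  -- measurability
  have hmeas : ∀ j : Fin n, Measurable (R j) := by
    refine strong _ ?_
    intro j ih
    have : R j = fun t => if t ∈ Set.Ico (0:ℝ) (tj j)
        then min (r j) (1 - ∑ i ∈ Finset.Iio j, R i t) else 0 := by
      funext t
      rw [hR j t]
      simp [Set.mem_Ico]
    rw [this]
    exact Measurable.ite measurableSet_Ico
      (measurable_const.min ((measurable_const.sub
        (Finset.measurable_sum _ (fun i hi => ih i (Finset.mem_Iio.mp hi))))))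
      measurable_const
  have hAmeas : ∀ j : Fin n, Measurable (A j) :=
    fun j => Finset.measurable_sum _ (fun i _ => hmeas i)
  have hfmeas : ∀ j : Fin n, Measurable (f j) :=
    fun j => measurable_const.min (measurable_const.sub (hAmeas j))
  -- interval integrability of bounded measurable functions
  have hint : ∀ (g : ℝ → ℝ), Measurable g → (∀ t, 0 ≤ g t) → (∀ t, g t ≤ 1) →
      ∀ a b : ℝ, IntervalIntegrable g volume a b := by
    intro g hg h0 h1 a b
    refine (intervalIntegrable_const (c := (1:ℝ))).mono_fun'
      hg.aestronglyMeasurable.restrict ?_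
    filter_upwards with t
    simp only [Real.norm_eq_abs, abs_of_nonneg (h0 t)]
    exact h1 t
  have hRint : ∀ j a b, IntervalIntegrable (R j) volume a b :=
    fun j => hint (R j) (hmeas j) (hR0 j) (hR1 j)
  have hfint : ∀ j a b, IntervalIntegrable (f j) volume a b :=
    fun j => hint (f j) (hfmeas j) (hf0 j) (hf1 j)
  have hAint : ∀ j a b, IntervalIntegrable (A j) volume a b :=
    fun j => hint (A j) (hAmeas j) (hA0 j) (hA1 j)
  -- ∫_0^{tj i} R i = v i
  have hRvol : ∀ i : Fin n, (∫ t in (0:ℝ)..(tj i), R i t) = v i := by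
    intro i
    rw [← hvol i]
    apply intervalIntegral.integral_congr_ae
    have hne : ∀ᵐ t : ℝ ∂volume, t ≠ tj i := by
      rw [ae_iff]
      simp only [ne_eq, not_not, Set.setOf_eq_eq_singleton]
      exact measure_singleton _
    filter_upwards [hne] with t ht htmem
    rw [Set.uIoc_of_le (le_of_lt (htj i))] at htmem
    rw [hR i t, if_pos ⟨le_of_lt htmem.1, lt_of_le_of_ne htmem.2 ht⟩]
  -- ∫_0^T R i ≤ v i for T ≥ 0
  have hRle : ∀ (i : Fin n) (T : ℝ), 0 ≤ T → (∫ t in (0:ℝ)..T, R i t) ≤ v i := by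
    intro i T hT
    rcases le_total T (tj i) with h | h
    · rw [← hRvol i, ← intervalIntegral.integral_add_adjacent_intervals
        (hRint i 0 T) (hRint i T (tj i))]
      have : 0 ≤ ∫ t in T..(tj i), R i t := by
        apply intervalIntegral.integral_nonneg h
        intro t _; exact hR0 i t
      linarith
    · rw [← intervalIntegral.integral_add_adjacent_intervals
        (hRint i 0 (tj i)) (hRint i (tj i) T), hRvol i]
      have : (∫ t in (tj i)..T, R i t) = 0 := by
        rw [intervalIntegral.integral_congr (g := fun _ => (0:ℝ)), intervalIntegral.integral_zero]
        intro t ht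
        rw [Set.uIcc_of_le h] at ht
        rw [hR i t, if_neg]
        rintro ⟨-, hlt⟩
        exact absurd ht.1 (not_le.mpr hlt)
      linarith
  -- per-job bound: tj j ≤ v j / r j + ∑_{i ≤ j} v i
  have hperjob : ∀ j : Fin n, tj j ≤ (∑ i ∈ Finset.Iic j, v i) + v j / r j := by
    intro j
    set g : ℝ → ℝ := fun t => f j t / r j + (A j t + f j t) with hg
    have hgint : IntervalIntegrable g volume 0 (tj j) := by
      apply IntervalIntegrable.add
      · exact (hfint j 0 (tj j)).div_const _
      · exact (hAint j 0 (tj j)).add (hfint j 0 (tj j))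
    have hpt : ∀ t ∈ Set.Icc (0:ℝ) (tj j), (1:ℝ) ≤ g t := by
      intro t _
      have h0 := hA0 j t
      have h1 := hA1 j t
      have hrj := hr j
      show (1:ℝ) ≤ f j t / r j + (A j t + f j t)
      rcases le_total (r j) (1 - A j t) with hc | hc
      · have hfe : f j t = r j := min_eq_left hc
        have hfr : f j t / r j = 1 := by rw [hfe]; exact div_self (ne_of_gt hrj.1)
        have hfn := hf0 j t
        rw [hfr]; linarith
      · have hfe : f j t = 1 - A j t := min_eq_right hc
        have hdn : (0:ℝ) ≤ f j t / r j := div_nonneg (hf0 j t) (le_of_lt hrj.1)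
        rw [hfe] at hdn ⊢; linarith
    have h1 : tj j = ∫ t in (0:ℝ)..(tj j), (1:ℝ) := by
      simp
    have h2 : (∫ t in (0:ℝ)..(tj j), (1:ℝ)) ≤ ∫ t in (0:ℝ)..(tj j), g t :=
      intervalIntegral.integral_mono_on (le_of_lt (htj j))
        intervalIntegrable_const hgint hpt
    have hfv : (∫ t in (0:ℝ)..(tj j), f j t) = v j := hvol j
    have h3 : (∫ t in (0:ℝ)..(tj j), g t)
        = v j / r j + ((∫ t in (0:ℝ)..(tj j), A j t) + v j) := by
      rw [hg]
      rw [intervalIntegral.integral_add ((hfint j 0 (tj j)).div_const _)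
        ((hAint j 0 (tj j)).add (hfint j 0 (tj j))),
        intervalIntegral.integral_add (hAint j 0 (tj j)) (hfint j 0 (tj j)),
        intervalIntegral.integral_div, hfv]
    have h4 : (∫ t in (0:ℝ)..(tj j), A j t) ≤ ∑ i ∈ Finset.Iio j, v i := by
      rw [hA]
      rw [intervalIntegral.integral_finset_sum (fun i _ => hRint i 0 (tj j))]
      exact Finset.sum_le_sum (fun i _ => hRle i (tj j) (le_of_lt (htj j)))
    have h5 : (∑ i ∈ Finset.Iio j, v i) + v j = ∑ i ∈ Finset.Iic j, v i := by
      rw [← Finset.Iio_insert, Finset.sum_insert (by simp)]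
      ring
    calc tj j = ∫ t in (0:ℝ)..(tj j), (1:ℝ) := h1
      _ ≤ ∫ t in (0:ℝ)..(tj j), g t := h2
      _ = v j / r j + ((∫ t in (0:ℝ)..(tj j), A j t) + v j) := h3
      _ ≤ v j / r j + ((∑ i ∈ Finset.Iio j, v i) + v j) := by linarith [h4]
      _ = (∑ i ∈ Finset.Iic j, v i) + v j / r j := by rw [h5]; ring
  calc ∑ j, tj j ≤ ∑ j, ((∑ i ∈ Finset.Iic j, v i) + v j / r j) :=
        Finset.sum_le_sum (fun j _ => hperjob j)
    _ = (∑ j, ∑ i ∈ Finset.Iic j, v i) + ∑ j, v j / r j := Finset.sum_add_distrib
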